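/- Let d, e ≥ 2 be integers, let ε₁, ε₂ ∈ {1, −1}, and let α ∈ ℂ ∖ {0}. Let f be the rational map on ℙ¹(ℂ) given in the affine coordinate by f(z) = z^{ε₁ d} (that is, z^d or z^{−d}), and let g be given by g(z) = α·z^{ε₂ e}. If α is a root of unity, then Preper(f) = Preper(g); if α is not a root of unity, then Preper(f) ∩ Preper(g) = {0, ∞} (the two points [0:1] and [1:0] of ℙ¹(ℂ)). -/
import Mathlib


noncomputable section

open MvPolynomial

abbrev P1 : Type := Projectivization ℂ (Fin 2 → ℂ)

lemma vec_ne {p q : ℂ} (h : p ≠ 0 ∨ q ≠ 0) : ![p, q] ≠ 0 := by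
  intro hz
  rcases h with h | h
  · exact h (by simpa using congrFun hz 0)
  · exact h (by simpa using congrFun hz 1)

/-- Evaluation at `v ∈ ℂ²` of the homogeneous degree-`d` form `∑ⱼ aⱼ Xʲ Y^(d-j)`
whose coefficient tuple is `a`. -/
def homEval {d : ℕ} (a : Fin (d + 1) → ℂ) (v : Fin 2 → ℂ) : ℂ :=
  ∑ j : Fin (d + 1), a j * v 0 ^ (j : ℕ) * v 1 ^ (d - (j : ℕ))

/-- The pair of degree-`d` forms with coefficient tuples `a`, `b` has no common zero
in `ℂ² \ {0}`. -/
def GoodPair {d : ℕ} (a b : Fin (d + 1) → ℂ) : Prop :=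
  ∀ v : Fin 2 → ℂ, v ≠ 0 → homEval a v ≠ 0 ∨ homEval b v ≠ 0

open Classical in
/-- The self-map of `ℙ¹(ℂ)` induced by the pair of degree-`d` forms with coefficient
tuples `a`, `b` (defined arbitrarily where both forms vanish, which does not happen
for a `GoodPair`). -/
def ratFun {d : ℕ} (a b : Fin (d + 1) → ℂ) (x : P1) : P1 :=
  if h : homEval a x.rep ≠ 0 ∨ homEval b x.rep ≠ 0 then
    Projectivization.mk ℂ ![homEval a x.rep, homEval b x.rep] (vec_ne h)
  else x

/-- A rational map of degree `d` on `ℙ¹(ℂ)`: a pair of homogeneous degree-`d` forms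
(recorded through their coefficient tuples) with no common zero in `ℂ² \ {0}`. -/
structure RatMap (d : ℕ) where
  a : Fin (d + 1) → ℂ
  b : Fin (d + 1) → ℂ
  good : GoodPair a b

/-- The self-map of `ℙ¹(ℂ)` induced by a rational map. -/
def RatMap.toFun {d : ℕ} (f : RatMap d) : P1 → P1 := ratFun f.a f.b

/-- The set of preperiodic points of a rational map of degree `d` on `ℙ¹(ℂ)`. -/
def Preper {d : ℕ} (f : RatMap d) : Set P1 :=
  {x | ∃ n m : ℕ, m < n ∧ f.toFun^[n] x = f.toFun^[m] x}

/-- The point `[z : 1]` of `ℙ¹(ℂ)`. -/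
def toP1 (z : ℂ) : P1 := Projectivization.mk ℂ ![z, 1] (vec_ne (Or.inr one_ne_zero))

/-- The point `∞ = [1 : 0]` of `ℙ¹(ℂ)`. -/
def infty : P1 := Projectivization.mk ℂ ![1, 0] (vec_ne (Or.inl one_ne_zero))

/-- The Möbius transformation of `ℙ¹(ℂ)` induced by an invertible linear map of `ℂ²`. -/
def mobius (M : (Fin 2 → ℂ) ≃ₗ[ℂ] (Fin 2 → ℂ)) (x : P1) : P1 :=
  Projectivization.mk ℂ (M x.rep) (by
    simpa using (LinearEquiv.map_ne_zero_iff M).mpr x.rep_nonzero)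

/-- Let `f(z) = z^(ε₁·d)` and `g(z) = α·z^(ε₂·e)` with `d, e ≥ 2`, signs
`ε₁, ε₂ ∈ {1, -1}`, and `α ≠ 0`, realized as the degree-`d` and degree-`e` rational maps
`F`, `G` on `ℙ¹(ℂ)` induced by the homogeneous pairs `(X^d, Y^d)` (resp. `(Y^d, X^d)`)
and `(α X^e, Y^e)` (resp. `(α Y^e, X^e)`). If `α` is a root of unity then
`Preper F = Preper G`; if `α` is not a root of unity then
`Preper F ∩ Preper G = {0, ∞}`. -/


lemma mk2_congr' {p q p' q' : ℂ} (hp : p = p') (hq : q = q') (h : ![p,q] ≠ 0) :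
    Projectivization.mk ℂ ![p,q] h = Projectivization.mk ℂ ![p',q'] (by rw [← hp, ← hq]; exact h) := by
  subst hp; subst hq; rfl

lemma mk2_eq_elim {p q p' q' : ℂ} {h : ![p,q] ≠ 0} {h' : ![p',q'] ≠ 0}
    (heq : Projectivization.mk ℂ ![p, q] h = Projectivization.mk ℂ ![p', q'] h') :
    ∃ c : ℂ, c ≠ 0 ∧ p = c * p' ∧ q = c * q' := by
  rw [Projectivization.mk_eq_mk_iff] at heq
  obtain ⟨u, hu⟩ := heq
  refine ⟨u, u.ne_zero, ?_, ?_⟩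
  · simpa [Units.smul_def] using (congrFun hu 0).symm
  · simpa [Units.smul_def] using (congrFun hu 1).symm

lemma mk2_eq_toP1 {p q : ℂ} (hq : q ≠ 0) {h : ![p,q] ≠ 0} :
    Projectivization.mk ℂ ![p, q] h = toP1 (p / q) := by
  rw [toP1, Projectivization.mk_eq_mk_iff]
  refine ⟨Units.mk0 q hq, ?_⟩
  funext i
  fin_cases i <;> simp [Units.smul_def] <;> field_simp

lemma mk2_eq_infty {p q : ℂ} (hp : p ≠ 0) (hq : q = 0) {h : ![p,q] ≠ 0} :
    Projectivization.mk ℂ ![p, q] h = infty := by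
  subst hq
  rw [infty, Projectivization.mk_eq_mk_iff]
  refine ⟨Units.mk0 p hp, ?_⟩
  funext i
  fin_cases i <;> simp [Units.smul_def]

lemma toP1_inj {z w : ℂ} (h : toP1 z = toP1 w) : z = w := by
  rw [toP1, toP1] at h
  obtain ⟨c, hc, h1, h2⟩ := mk2_eq_elim h
  have hc1 : c = 1 := by simpa using h2.symm
  simpa [hc1] using h1

lemma toP1_ne_infty (z : ℂ) : toP1 z ≠ infty := by
  intro h
  rw [toP1, infty] at h
  obtain ⟨c, hc, h1, h2⟩ := mk2_eq_elim h
  simp at h2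

lemma P1_cases (x : P1) : (∃ z : ℂ, x = toP1 z) ∨ x = infty := by
  have h' : ![x.rep 0, x.rep 1] ≠ 0 := by
    intro hz
    apply x.rep_nonzero
    funext i
    fin_cases i
    · simpa using congrFun hz 0
    · simpa using congrFun hz 1
  have key : x = Projectivization.mk ℂ ![x.rep 0, x.rep 1] h' := by
    conv_lhs => rw [← Projectivization.mk_rep x]
    rw [Projectivization.mk_eq_mk_iff]
    refine ⟨1, ?_⟩
    funext i
    fin_cases i <;> simp
  by_cases h1 : x.rep 1 = 0
  · right
    rw [key]
    refine mk2_eq_infty ?_ h1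
    intro h0
    apply h'
    funext i
    fin_cases i <;> simp [h0, h1]
  · left
    exact ⟨_, by rw [key]; exact mk2_eq_toP1 h1⟩

-- ============ homEval computations ============

lemma homEval_single {d k : ℕ} (hk : k ≤ d) (c : ℂ) (v : Fin 2 → ℂ) :
    homEval (fun j : Fin (d+1) => if (j : ℕ) = k then c else 0) v = c * v 0 ^ k * v 1 ^ (d - k) := by
  unfold homEval
  rw [Fintype.sum_eq_single (⟨k, by omega⟩ : Fin (d+1))
    (fun j hj => by
      have hj' : (j : ℕ) ≠ k := fun hh => hj (Fin.ext hh)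
      simp [hj'])]
  simp

lemma homEval_smul {d : ℕ} (a : Fin (d+1) → ℂ) (c : ℂ) (v : Fin 2 → ℂ) :
    homEval a (c • v) = c ^ d * homEval a v := by
  unfold homEval
  rw [Finset.mul_sum]
  refine Finset.sum_congr rfl fun j _ => ?_
  have hj : (j : ℕ) ≤ d := Nat.lt_succ_iff.mp j.isLt
  have hc : c ^ (j:ℕ) * c ^ (d - (j:ℕ)) = c ^ d := by rw [← pow_add]; congr 1; omega
  simp only [Pi.smul_apply, smul_eq_mul, mul_pow]
  calc a j * (c ^ (j:ℕ) * v 0 ^ (j:ℕ)) * (c ^ (d - (j:ℕ)) * v 1 ^ (d - (j:ℕ)))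
      = (c ^ (j:ℕ) * c ^ (d - (j:ℕ))) * (a j * v 0 ^ (j:ℕ) * v 1 ^ (d - (j:ℕ))) := by ring
    _ = c ^ d * (a j * v 0 ^ (j:ℕ) * v 1 ^ (d - (j:ℕ))) := by rw [hc]

lemma ratFun_mk {d : ℕ} {a b : Fin (d+1) → ℂ} (good : GoodPair a b) (v : Fin 2 → ℂ) (hv : v ≠ 0) :
    ratFun a b (Projectivization.mk ℂ v hv)
      = Projectivization.mk ℂ ![homEval a v, homEval b v] (vec_ne (good v hv)) := by
  have hx : Projectivization.mk ℂ (Projectivization.mk ℂ v hv).rep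
      (Projectivization.rep_nonzero _) = Projectivization.mk ℂ v hv :=
    Projectivization.mk_rep _
  obtain ⟨u, hu⟩ := (Projectivization.mk_eq_mk_iff ℂ _ _ _ _).mp hx
  have ha : homEval a (Projectivization.mk ℂ v hv).rep = (u:ℂ)^d * homEval a v := by
    rw [← hu, Units.smul_def, homEval_smul]
  have hb : homEval b (Projectivization.mk ℂ v hv).rep = (u:ℂ)^d * homEval b v := by
    rw [← hu, Units.smul_def, homEval_smul]
  have hgood : homEval a (Projectivization.mk ℂ v hv).rep ≠ 0 ∨
      homEval b (Projectivization.mk ℂ v hv).rep ≠ 0 :=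
    good _ (Projectivization.rep_nonzero _)
  unfold ratFun
  rw [dif_pos hgood, Projectivization.mk_eq_mk_iff]
  refine ⟨Units.mk0 ((u:ℂ)^d) (pow_ne_zero d u.ne_zero), ?_⟩
  funext i
  fin_cases i <;> simp [Units.smul_def, ha, hb]

-- ============ integer sequence ============

def mseq (s : ℤ) : ℕ → ℤ
  | 0 => 0
  | n + 1 => 1 + s * mseq s n

lemma mseq_mul (s : ℤ) (n : ℕ) : (s - 1) * mseq s n = s ^ n - 1 := by
  induction n with
  | zero => simp [mseq]
  | succ n ih =>
    show (s - 1) * (1 + s * mseq s n) = s ^ (n+1) - 1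
    linear_combination s * ih

lemma pow_nat_inj {s : ℤ} (hs : 2 ≤ s.natAbs) {n m : ℕ} (h : s ^ n = s ^ m) : n = m := by
  have h2 : s.natAbs ^ n = s.natAbs ^ m := by
    have := congrArg Int.natAbs h
    simpa [Int.natAbs_pow] using this
  exact Nat.pow_right_injective hs h2

lemma mseq_inj {s : ℤ} (hs : 2 ≤ s.natAbs) {n m : ℕ} (h : mseq s n = mseq s m) : n = m := by
  have h1 : s ^ n = s ^ m := by
    have e1 := mseq_mul s n
    have e2 := mseq_mul s m
    rw [h] at e1
    omega
  exact pow_nat_inj hs h1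

lemma exists_collision {M : ℕ} (hM : 1 ≤ M) (w : ℕ → ℂ) (hw : ∀ n, w n ^ M = 1) :
    ∃ n m : ℕ, m < n ∧ w n = w m := by
  classical
  have hcard : ((Polynomial.nthRoots M (1:ℂ)).toFinset).card < (Finset.range (M+1)).card := by
    rw [Finset.card_range]
    have h1 := Multiset.toFinset_card_le (Polynomial.nthRoots M (1:ℂ))
    have h2 := Polynomial.card_nthRoots M (1:ℂ)
    omega
  have hmaps : ∀ n ∈ Finset.range (M+1), w n ∈ (Polynomial.nthRoots M (1:ℂ)).toFinset := by
    intro n _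
    rw [Multiset.mem_toFinset, Polynomial.mem_nthRoots (by omega)]
    exact hw n
  obtain ⟨n, _, m, _, hne, heq⟩ := Finset.exists_ne_map_eq_of_card_lt_of_maps_to hcard hmaps
  rcases Nat.lt_or_ge m n with h | h
  · exact ⟨n, m, h, heq⟩
  · exact ⟨m, n, by omega, heq.symm⟩

lemma zpow_eq_one_root {z : ℂ} (hz : z ≠ 0) {K : ℤ} (hK : K ≠ 0) (h : z ^ K = 1) :
    ∃ N : ℕ, 1 ≤ N ∧ z ^ N = 1 := by
  refine ⟨K.natAbs, by omega, ?_⟩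
  rcases Int.natAbs_eq K with h' | h'
  · rw [← zpow_natCast, ← h', h]
  · have h2 : z ^ (-(K.natAbs : ℤ)) = 1 := by rw [← h', h]
    rw [zpow_neg, inv_eq_one] at h2
    rw [← zpow_natCast, h2]

def PreSet (f : P1 → P1) : Set P1 := {x | ∃ n m : ℕ, m < n ∧ f^[n] x = f^[m] x}

lemma two_cycle_mem {f : P1 → P1} {x y : P1} (hxy : f x = y) (hyx : f y = x) :
    x ∈ PreSet f := by
  refine ⟨2, 0, by omega, ?_⟩
  have h2 : f^[2] x = x := by
    have h3 : f^[2] x = f (f x) := by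
      rw [Function.iterate_succ_apply', Function.iterate_one]
    rw [h3, hxy, hyx]
  simpa using h2

section Dyn

variable {k : ℕ} {ε : ℤ} {β : ℂ} {f : P1 → P1}

lemma orbit_formula (hβ : β ≠ 0)
    (hf : ∀ z : ℂ, z ≠ 0 → f (toP1 z) = toP1 (β * z ^ (ε * (k:ℤ))))
    (z : ℂ) (hz : z ≠ 0) (n : ℕ) :
    f^[n] (toP1 z) = toP1 (β ^ (mseq (ε * (k:ℤ)) n) * z ^ ((ε * (k:ℤ)) ^ n)) := by
  induction n with
  | zero => simp [mseq]
  | succ n ih =>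
    set s : ℤ := ε * (k:ℤ) with hs
    have h1 : β ^ (mseq s n) * z ^ (s^n) ≠ 0 :=
      mul_ne_zero (zpow_ne_zero _ hβ) (zpow_ne_zero _ hz)
    rw [Function.iterate_succ_apply', ih, hf _ h1]
    congr 1
    show β * (β ^ mseq s n * z ^ s ^ n) ^ s = β ^ mseq s (n+1) * z ^ s ^ (n+1)
    rw [show mseq s (n+1) = 1 + s * mseq s n from rfl,
        pow_succ, mul_zpow, ← zpow_mul, ← zpow_mul, zpow_add₀ hβ, zpow_one,
        mul_comm s (mseq s n)]
    ring

lemma mem_of_roots (hβ : β ≠ 0)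
    (hf : ∀ z : ℂ, z ≠ 0 → f (toP1 z) = toP1 (β * z ^ (ε * (k:ℤ))))
    (hβroot : ∃ M : ℕ, 1 ≤ M ∧ β ^ M = 1) {z : ℂ} (hz : z ≠ 0)
    (hzroot : ∃ N : ℕ, 1 ≤ N ∧ z ^ N = 1) : toP1 z ∈ PreSet f := by
  obtain ⟨M, hM, hβM⟩ := hβroot
  obtain ⟨N, hN, hzN⟩ := hzroot
  set s : ℤ := ε * (k:ℤ) with hs
  set P := M * N with hP
  have hP1 : 1 ≤ P := by simpa using Nat.mul_le_mul hM hN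
  have hβP : β ^ P = 1 := by rw [hP, pow_mul, hβM, one_pow]
  have hzP : z ^ P = 1 := by rw [hP, mul_comm, pow_mul, hzN, one_pow]
  have hw : ∀ n : ℕ, (β ^ (mseq s n) * z ^ (s ^ n)) ^ P = 1 := by
    intro n
    have h1 : (β ^ (mseq s n)) ^ (P:ℕ) = 1 := by
      rw [← zpow_natCast (β ^ (mseq s n)) P, ← zpow_mul, mul_comm (mseq s n) ((P:ℕ):ℤ),
          zpow_mul, zpow_natCast, hβP, one_zpow]
    have h2 : (z ^ (s ^ n)) ^ (P:ℕ) = 1 := by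
      rw [← zpow_natCast (z ^ (s ^ n)) P, ← zpow_mul, mul_comm (s ^ n) ((P:ℕ):ℤ),
          zpow_mul, zpow_natCast, hzP, one_zpow]
    rw [mul_pow, h1, h2, one_mul]
  obtain ⟨n, m, hlt, heq⟩ := exists_collision hP1 _ hw
  exact ⟨n, m, hlt, by
    rw [orbit_formula hβ hf z hz n, orbit_formula hβ hf z hz m, heq]⟩

lemma rel_of_mem (hk : 2 ≤ k) (hε : ε = 1 ∨ ε = -1) (hβ : β ≠ 0)
    (hf : ∀ z : ℂ, z ≠ 0 → f (toP1 z) = toP1 (β * z ^ (ε * (k:ℤ))))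
    {z : ℂ} (hz : z ≠ 0) (hmem : toP1 z ∈ PreSet f) :
    ∃ K L : ℤ, K ≠ 0 ∧ L ≠ 0 ∧ z ^ K = β ^ L := by
  obtain ⟨n, m, hlt, heq⟩ := hmem
  set s : ℤ := ε * (k:ℤ) with hs
  have hsabs : s.natAbs = k := by
    rcases hε with h | h <;> subst h <;> simp [hs, Int.natAbs_mul]
  have hsabs2 : 2 ≤ s.natAbs := by omega
  rw [orbit_formula hβ hf z hz n, orbit_formula hβ hf z hz m] at heq
  have heq' := toP1_inj heq
  refine ⟨s^n - s^m, mseq s m - mseq s n, ?_, ?_, ?_⟩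
  · intro h0
    have h1 : s^n = s^m := by omega
    exact absurd (pow_nat_inj hsabs2 h1) (by omega)
  · intro h0
    have h1 : mseq s n = mseq s m := by omega
    exact absurd (mseq_inj hsabs2 h1) (by omega)
  · rw [zpow_sub₀ hz, zpow_sub₀ hβ, div_eq_div_iff (zpow_ne_zero _ hz) (zpow_ne_zero _ hβ)]
    linear_combination heq'

end Dyn

lemma map_compute {d : ℕ} (hd : 2 ≤ d) (ε : ℤ) (hε : ε = 1 ∨ ε = -1) (β : ℂ) (hβ : β ≠ 0)
    (F : RatMap d)
    (hFa : F.a = fun j : Fin (d + 1) => if (j : ℕ) = (if ε = 1 then d else 0) then β else 0)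
    (hFb : F.b = fun j : Fin (d + 1) => if (j : ℕ) = (if ε = 1 then 0 else d) then 1 else 0) :
    (∀ z : ℂ, z ≠ 0 → F.toFun (toP1 z) = toP1 (β * z ^ (ε * (d:ℤ)))) ∧
    ((F.toFun (toP1 0) = toP1 0 ∧ F.toFun infty = infty) ∨
      (F.toFun (toP1 0) = infty ∧ F.toFun infty = toP1 0)) := by
  have hd0 : d ≠ 0 := by omega
  rcases hε with h | h <;> subst h
  · rw [show (if (1:ℤ) = 1 then d else 0) = d from by norm_num] at hFa
    rw [show (if (1:ℤ) = 1 then 0 else d) = 0 from by norm_num] at hFb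
    have hA : ∀ v : Fin 2 → ℂ, homEval F.a v = β * v 0 ^ d := by
      intro v; rw [hFa, homEval_single (le_refl d)]; simp
    have hB : ∀ v : Fin 2 → ℂ, homEval F.b v = v 1 ^ d := by
      intro v; rw [hFb, homEval_single (Nat.zero_le d)]; simp
    refine ⟨?_, Or.inl ⟨?_, ?_⟩⟩
    · intro z hz
      show ratFun F.a F.b (Projectivization.mk ℂ ![z, 1] (vec_ne (Or.inr one_ne_zero))) = _
      rw [ratFun_mk F.good]
      refine (mk2_congr' (show homEval F.a ![z,1] = β * z ^ d from (hA _).trans (by norm_num))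
        (show homEval F.b ![z,1] = 1 from (hB _).trans (by norm_num)) _).trans ?_
      refine (mk2_eq_toP1 one_ne_zero).trans ?_
      rw [div_one, one_mul ((d:ℤ)), zpow_natCast]
    · show ratFun F.a F.b (Projectivization.mk ℂ ![0, 1] (vec_ne (Or.inr one_ne_zero))) = _
      rw [ratFun_mk F.good]
      refine (mk2_congr' (show homEval F.a ![0,1] = 0 from (hA _).trans (by
          simp [zero_pow hd0]))
        (show homEval F.b ![0,1] = 1 from (hB _).trans (by norm_num)) _).trans ?_
      exact mk2_congr' rfl rfl _
    · show ratFun F.a F.b (Projectivization.mk ℂ ![1, 0] (vec_ne (Or.inl one_ne_zero))) = _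
      rw [ratFun_mk F.good]
      refine (mk2_congr' (show homEval F.a ![1,0] = β from (hA _).trans (by norm_num))
        (show homEval F.b ![1,0] = 0 from (hB _).trans (by
          simp [zero_pow hd0])) _).trans ?_
      exact mk2_eq_infty hβ rfl
  · rw [show (if (-1:ℤ) = 1 then d else 0) = 0 from by norm_num] at hFa
    rw [show (if (-1:ℤ) = 1 then 0 else d) = d from by norm_num] at hFb
    have hA : ∀ v : Fin 2 → ℂ, homEval F.a v = β * v 1 ^ d := by
      intro v; rw [hFa, homEval_single (Nat.zero_le d)]; simp
    have hB : ∀ v : Fin 2 → ℂ, homEval F.b v = v 0 ^ d := by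
      intro v; rw [hFb, homEval_single (le_refl d)]; simp
    refine ⟨?_, Or.inr ⟨?_, ?_⟩⟩
    · intro z hz
      show ratFun F.a F.b (Projectivization.mk ℂ ![z, 1] (vec_ne (Or.inr one_ne_zero))) = _
      rw [ratFun_mk F.good]
      refine (mk2_congr' (show homEval F.a ![z,1] = β from (hA _).trans (by norm_num))
        (show homEval F.b ![z,1] = z ^ d from (hB _).trans (by norm_num)) _).trans ?_
      refine (mk2_eq_toP1 (pow_ne_zero d hz)).trans ?_
      rw [neg_one_mul, zpow_neg, zpow_natCast, div_eq_mul_inv]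
    · show ratFun F.a F.b (Projectivization.mk ℂ ![0, 1] (vec_ne (Or.inr one_ne_zero))) = _
      rw [ratFun_mk F.good]
      refine (mk2_congr' (show homEval F.a ![0,1] = β from (hA _).trans (by norm_num))
        (show homEval F.b ![0,1] = 0 from (hB _).trans (by
          simp [zero_pow hd0])) _).trans ?_
      exact mk2_eq_infty hβ rfl
    · show ratFun F.a F.b (Projectivization.mk ℂ ![1, 0] (vec_ne (Or.inl one_ne_zero))) = _
      rw [ratFun_mk F.good]
      refine (mk2_congr' (show homEval F.a ![1,0] = 0 from (hA _).trans (by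
          simp [zero_pow hd0]))
        (show homEval F.b ![1,0] = 1 from (hB _).trans (by norm_num)) _).trans ?_
      exact mk2_congr' rfl rfl _

theorem statement15 (d e : ℕ) (hd : 2 ≤ d) (he : 2 ≤ e) (ε₁ ε₂ : ℤ)
    (hε₁ : ε₁ = 1 ∨ ε₁ = -1) (hε₂ : ε₂ = 1 ∨ ε₂ = -1) (α : ℂ) (hα : α ≠ 0)
    (F : RatMap d) (G : RatMap e)
    (hFa : F.a = fun j : Fin (d + 1) => if (j : ℕ) = (if ε₁ = 1 then d else 0) then 1 else 0)
    (hFb : F.b = fun j : Fin (d + 1) => if (j : ℕ) = (if ε₁ = 1 then 0 else d) then 1 else 0)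
    (hGa : G.a = fun j : Fin (e + 1) => if (j : ℕ) = (if ε₂ = 1 then e else 0) then α else 0)
    (hGb : G.b = fun j : Fin (e + 1) => if (j : ℕ) = (if ε₂ = 1 then 0 else e) then 1 else 0) :
    ((∃ n : ℕ, 1 ≤ n ∧ α ^ n = 1) → Preper F = Preper G) ∧
    (¬ (∃ n : ℕ, 1 ≤ n ∧ α ^ n = 1) → Preper F ∩ Preper G = {toP1 0, infty}) := by
  obtain ⟨hfF, hbF⟩ := map_compute hd ε₁ hε₁ 1 one_ne_zero F hFa hFb
  obtain ⟨hfG, hbG⟩ := map_compute he ε₂ hε₂ α hα G hGa hGb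
  have hmemF0 : toP1 0 ∈ PreSet F.toFun := by
    rcases hbF with ⟨h0, hi⟩ | ⟨h0, hi⟩
    exacts [two_cycle_mem h0 h0, two_cycle_mem h0 hi]
  have hmemFi : infty ∈ PreSet F.toFun := by
    rcases hbF with ⟨h0, hi⟩ | ⟨h0, hi⟩
    exacts [two_cycle_mem hi hi, two_cycle_mem hi h0]
  have hmemG0 : toP1 0 ∈ PreSet G.toFun := by
    rcases hbG with ⟨h0, hi⟩ | ⟨h0, hi⟩
    exacts [two_cycle_mem h0 h0, two_cycle_mem h0 hi]
  have hmemGi : infty ∈ PreSet G.toFun := by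
    rcases hbG with ⟨h0, hi⟩ | ⟨h0, hi⟩
    exacts [two_cycle_mem hi hi, two_cycle_mem hi h0]
  have charF : ∀ z : ℂ, z ≠ 0 → (toP1 z ∈ PreSet F.toFun ↔ ∃ N : ℕ, 1 ≤ N ∧ z ^ N = 1) := by
    intro z hz
    constructor
    · intro hm
      obtain ⟨K, L, hK, hL, hrel⟩ := rel_of_mem hd hε₁ one_ne_zero hfF hz hm
      rw [one_zpow] at hrel
      exact zpow_eq_one_root hz hK hrel
    · intro hroot
      exact mem_of_roots one_ne_zero hfF ⟨1, le_refl 1, one_pow 1⟩ hz hroot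
  constructor
  · rintro ⟨M, hM, hαM⟩
    have charG : ∀ z : ℂ, z ≠ 0 → (toP1 z ∈ PreSet G.toFun ↔ ∃ N : ℕ, 1 ≤ N ∧ z ^ N = 1) := by
      intro z hz
      constructor
      · intro hm
        obtain ⟨K, L, hK, hL, hrel⟩ := rel_of_mem he hε₂ hα hfG hz hm
        have h1 : z ^ (K * (M:ℤ)) = 1 := by
          rw [zpow_mul, hrel, ← zpow_mul, mul_comm L (M:ℤ), zpow_mul, zpow_natCast,
              hαM, one_zpow]
        exact zpow_eq_one_root hz
          (mul_ne_zero hK (show ((M:ℤ)) ≠ 0 from Int.natCast_ne_zero.mpr (by omega))) h1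
      · intro hroot
        exact mem_of_roots hα hfG ⟨M, hM, hαM⟩ hz hroot
    ext x
    rcases P1_cases x with ⟨z, rfl⟩ | rfl
    · by_cases hz : z = 0
      · subst hz
        exact ⟨fun _ => hmemG0, fun _ => hmemF0⟩
      · exact (charF z hz).trans ((charG z hz).symm)
    · exact ⟨fun _ => hmemGi, fun _ => hmemFi⟩
  · intro hnot
    ext x
    simp only [Set.mem_inter_iff, Set.mem_insert_iff, Set.mem_singleton_iff]
    constructor
    · rintro ⟨hxF, hxG⟩
      rcases P1_cases x with ⟨z, rfl⟩ | rfl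
      · by_cases hz : z = 0
        · left; rw [hz]
        · exfalso
          obtain ⟨N, hN, hzN⟩ := (charF z hz).mp hxF
          obtain ⟨K, L, hK, hL, hrel⟩ := rel_of_mem he hε₂ hα hfG hz hxG
          have hNe : ((N:ℤ)) ≠ 0 := Int.natCast_ne_zero.mpr (by omega)
          have h1 : α ^ (L * (N:ℤ)) = 1 := by
            rw [zpow_mul, ← hrel, ← zpow_mul, mul_comm K (N:ℤ), zpow_mul, zpow_natCast,
                hzN, one_zpow]
          exact hnot (zpow_eq_one_root hα (mul_ne_zero hL hNe) h1)
      · right; rfl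
    · rintro (rfl | rfl)
      · exact ⟨hmemF0, hmemG0⟩
      · exact ⟨hmemFi, hmemGi⟩
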